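/- Let H be a symmetric positive definite d×d real matrix, θ* ∈ ℝ^d, g(θ) = H(θ − θ*), α > 0, μ ≥ 0. On a probability space, let (ε_t)_{t≥0} be integrable random vectors in ℝ^d with E[ε_t] = 0, and define random iterates with θ_0 deterministic, v_0 = g(θ_0) + ε_0, w_0 = 0; for t ≥ 1: v_t = (t/(t+1)) v_{t-1} + (1/(t+1)) g(θ_t + t(θ_t − θ_{t-1})) + (1/(t+1)) ε_t; and for t ≥ 0: w_{t+1} = μ w_t + α v_t, θ_{t+1} = θ_t − w_{t+1}. Assume all iterates are integrable. Let A be the 2d×2d block matrix with block rows (I − αH + μI, −μI) and (I, 0). Then for every t ≥ 1: the stacked expected error (E[θ_t − θ*], E[θ_{t-1} − θ*]) equals A^{t-1} (E[θ_1 − θ*], E[θ_0 − θ*]). In particular, if the spectral radius of A is strictly less than 1, then E[θ_t − θ*] converges linearly to zero. -/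

import Mathlib

open MeasureTheory ProbabilityTheory
open scoped ENNReal NNReal

/-- The spectral radius of a real square matrix: the maximum modulus of its complex
eigenvalues. -/
noncomputable def specRad {n : Type*} [Fintype n] [DecidableEq n]
    (A : Matrix n n ℝ) : ℝ :=
  sSup ((fun z : ℂ => ‖z‖) '' spectrum ℂ (A.map (algebraMap ℝ ℂ)))

attribute [local instance] Matrix.linftyOpNormedAddCommGroup Matrix.linftyOpNormedRing
  Matrix.linftyOpNormedAlgebra

lemma norm_map_complex {n m : Type*} [Fintype n] [Fintype m] (M : Matrix n m ℝ) :
    ‖M.map (algebraMap ℝ ℂ)‖ = ‖M‖ := by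
  rw [Matrix.linfty_opNorm_def, Matrix.linfty_opNorm_def]
  congr 1
  congr 1
  ext i
  congr 1
  ext j
  simp [Matrix.map_apply]

lemma norm_elim_left {n m : Type*} [Fintype n] [Fintype m] (x : n → ℝ) (y : m → ℝ) :
    ‖x‖ ≤ ‖Sum.elim x y‖ := by
  refine (pi_norm_le_iff_of_nonneg (norm_nonneg _)).mpr fun i => ?_
  simpa using norm_le_pi_norm (Sum.elim x y) (Sum.inl i)

open Filter in
lemma specRad_geom_bound {n : Type*} [Fintype n] [DecidableEq n] (A : Matrix n n ℝ)
    (h : specRad A < 1) :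
    ∃ ρ : ℝ, 0 < ρ ∧ ρ < 1 ∧ ∃ N : ℕ, ∀ m : ℕ, N ≤ m → ‖A ^ m‖ ≤ ρ ^ m := by
  set B : Matrix n n ℂ := A.map (algebraMap ℝ ℂ) with hB
  have hbdd : BddAbove ((fun z : ℂ => ‖z‖) '' spectrum ℂ B) :=
    ((Matrix.finite_spectrum B).image _).bddAbove
  have hnn : 0 ≤ specRad A :=
    Real.sSup_nonneg (by rintro x ⟨z, _, rfl⟩; exact norm_nonneg z)
  set ρ : ℝ := (specRad A + 1) / 2 with hρdef
  have hρ0 : 0 < ρ := by rw [hρdef]; linarith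
  have hρ1 : ρ < 1 := by rw [hρdef]; linarith
  have hlt : specRad A < ρ := by rw [hρdef]; linarith
  have hsr : spectralRadius ℂ B < ENNReal.ofReal ρ := by
    refine lt_of_le_of_lt (?_ : _ ≤ ENNReal.ofReal (specRad A))
      ((ENNReal.ofReal_lt_ofReal_iff hρ0).mpr hlt)
    rw [spectralRadius]
    refine iSup₂_le fun z hz => ?_
    rw [← enorm_eq_nnnorm, ← ofReal_norm]
    refine ENNReal.ofReal_le_ofReal ?_
    exact le_csSup hbdd ⟨z, hz, rfl⟩
  haveI : CompleteSpace (Matrix n n ℂ) := FiniteDimensional.complete ℂ _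
  have hg := spectrum.pow_nnnorm_pow_one_div_tendsto_nhds_spectralRadius B
  obtain ⟨N, hN⟩ := (hg.eventually_lt_const hsr).exists_forall_of_atTop
  refine ⟨ρ, hρ0, hρ1, N + 1, fun m hm => ?_⟩
  have hm0 : (m : ℝ) ≠ 0 := by
    have : m ≠ 0 := by omega
    exact_mod_cast this
  have h1 : (‖B ^ m‖₊ : ℝ≥0∞) ^ (1 / (m : ℝ)) < ENNReal.ofReal ρ := hN m (by omega)
  have h2 : (‖B ^ m‖₊ : ℝ≥0∞) ≤ ENNReal.ofReal ρ ^ (m : ℝ) := by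
    have := ENNReal.rpow_le_rpow h1.le (show (0:ℝ) ≤ (m:ℝ) by positivity)
    rwa [← ENNReal.rpow_mul, one_div, inv_mul_cancel₀ hm0, ENNReal.rpow_one] at this
  have h3 : (‖B ^ m‖₊ : ℝ≥0∞) ≤ ENNReal.ofReal (ρ ^ m) := by
    rwa [ENNReal.ofReal_rpow_of_pos hρ0, Real.rpow_natCast] at h2
  have h4 : ‖B ^ m‖ ≤ ρ ^ m := by
    rw [← enorm_eq_nnnorm, ← ofReal_norm] at h3
    exact (ENNReal.ofReal_le_ofReal_iff (by positivity)).mp h3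
  have hmap_pow : (A ^ m).map (algebraMap ℝ ℂ) = B ^ m := by
    have := map_pow ((algebraMap ℝ ℂ).mapMatrix) A m
    simpa [RingHom.mapMatrix_apply, hB] using this
  calc ‖A ^ m‖ = ‖(A ^ m).map (algebraMap ℝ ℂ)‖ := (norm_map_complex _).symm
    _ = ‖B ^ m‖ := by rw [hmap_pow]
    _ ≤ ρ ^ m := h4

/-- **Bias dynamics of Heavyball-IGT on a quadratic.** With `H` symmetric positive definite,
`g θ = H (θ - θ*)`, zero-mean integrable noises, and the Heavyball-IGT iterates
(θ 0 deterministic, all iterates integrable), the stacked expected errors satisfy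
`(E[θ t - θ*], E[θ (t-1) - θ*]) = A^(t-1) (E[θ 1 - θ*], E[θ 0 - θ*])` for `t ≥ 1`, where
`A = [[I - αH + μI, -μI], [I, 0]]`. In particular, if the spectral radius of `A` is less
than `1`, then `E[θ t - θ*]` converges linearly to zero. -/
theorem heavyball_igt_bias_dynamics {d : ℕ}
    (H : Matrix (Fin d) (Fin d) ℝ) (hsymm : H.IsSymm) (hpd : H.PosDef)
    (θstar : Fin d → ℝ) (α μ : ℝ) (hα : 0 < α) (hμ : 0 ≤ μ)
    (g : (Fin d → ℝ) → (Fin d → ℝ)) (hg : ∀ x, g x = H.mulVec (x - θstar))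
    {Ω : Type*} [MeasureSpace Ω] [IsProbabilityMeasure (ℙ : Measure Ω)]
    (ε : ℕ → Ω → Fin d → ℝ)
    (hεint : ∀ t, Integrable (ε t))
    (hεmean : ∀ t, (∫ ω, ε t ω) = 0)
    (θ v w : ℕ → Ω → Fin d → ℝ)
    (θ₀ : Fin d → ℝ) (hθ0 : θ 0 = fun _ => θ₀)
    (hv0 : ∀ ω, v 0 ω = g (θ 0 ω) + ε 0 ω)
    (hw0 : ∀ ω, w 0 ω = 0)
    (hv : ∀ t : ℕ, 1 ≤ t → ∀ ω, v t ω = ((t : ℝ) / ((t : ℝ) + 1)) • v (t - 1) ω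
        + (1 / ((t : ℝ) + 1)) • g (θ t ω + (t : ℝ) • (θ t ω - θ (t - 1) ω))
        + (1 / ((t : ℝ) + 1)) • ε t ω)
    (hw : ∀ t : ℕ, ∀ ω, w (t + 1) ω = μ • w t ω + α • v t ω)
    (hθ : ∀ t : ℕ, ∀ ω, θ (t + 1) ω = θ t ω - w (t + 1) ω)
    (hθint : ∀ t, Integrable (θ t)) (hvint : ∀ t, Integrable (v t))
    (hwint : ∀ t, Integrable (w t))
    (A : Matrix (Fin d ⊕ Fin d) (Fin d ⊕ Fin d) ℝ)
    (hA : A = Matrix.fromBlocks (1 - α • H + μ • 1) (-(μ • (1 : Matrix (Fin d) (Fin d) ℝ)))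
        1 0) :
    (∀ t : ℕ, 1 ≤ t →
      Sum.elim ((∫ ω, θ t ω) - θstar) ((∫ ω, θ (t - 1) ω) - θstar)
        = (A ^ (t - 1)).mulVec
            (Sum.elim ((∫ ω, θ 1 ω) - θstar) ((∫ ω, θ 0 ω) - θstar))) ∧
    (specRad A < 1 →
      ∃ C ρ : ℝ, 0 ≤ C ∧ 0 ≤ ρ ∧ ρ < 1 ∧
        ∀ t : ℕ, ‖(∫ ω, θ t ω) - θstar‖ ≤ C * ρ ^ t) := by
  -- integrability and integral-commutation for `H.mulVec`
  have hgint : ∀ {f : Ω → Fin d → ℝ}, Integrable f →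
      Integrable (fun ω => H.mulVec (f ω)) := by
    intro f hf
    have := (LinearMap.toContinuousLinearMap (Matrix.mulVecLin H)).integrable_comp hf
    simpa [Matrix.mulVecLin_apply] using this
  have hgcomm : ∀ {f : Ω → Fin d → ℝ}, Integrable f →
      (∫ ω, H.mulVec (f ω)) = H.mulVec (∫ ω, f ω) := by
    intro f hf
    have := (LinearMap.toContinuousLinearMap (Matrix.mulVecLin H)).integral_comp_comm hf
    simpa [Matrix.mulVecLin_apply] using this
  have hI0 : (∫ ω, θ 0 ω) = θ₀ := by rw [hθ0]; simp
  -- unbiasedness of the IGT estimator on quadratics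
  have hV : ∀ t, (∫ ω, v t ω) = H.mulVec ((∫ ω, θ t ω) - θstar) := by
    intro t
    induction t with
    | zero =>
      have h0 : ∀ ω, v 0 ω = H.mulVec (θ₀ - θstar) + ε 0 ω := by
        intro ω; rw [hv0, hg, hθ0]
      rw [integral_congr_ae (Filter.Eventually.of_forall h0),
        integral_add (integrable_const _) (hεint 0), hεmean 0, add_zero, integral_const, hI0]
      simp
    | succ s ih =>
      set c : ℝ := ((s + 1 : ℕ) : ℝ) with hc
      have hcnn : (0:ℝ) ≤ c := by rw [hc]; positivity
      have hc1 : c + 1 ≠ 0 := by positivity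
      have hveq : ∀ ω, v (s+1) ω =
          (c / (c + 1)) • v s ω
          + (1 / (c + 1)) • (H.mulVec (θ (s+1) ω + c • (θ (s+1) ω - θ s ω) - θstar))
          + (1 / (c + 1)) • ε (s+1) ω := by
        intro ω
        have := hv (s+1) (by omega) ω
        rw [hg] at this
        simpa only [Nat.add_sub_cancel] using this
      have hfint : Integrable (fun ω => θ (s+1) ω + c • (θ (s+1) ω - θ s ω) - θstar) := by
        exact ((hθint (s+1)).add (((hθint (s+1)).sub (hθint s)).smul c)).sub
          (integrable_const θstar)
      have hmid : (∫ ω, H.mulVec (θ (s+1) ω + c • (θ (s+1) ω - θ s ω) - θstar))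
          = H.mulVec ((∫ ω, θ (s+1) ω) + c • ((∫ ω, θ (s+1) ω) - (∫ ω, θ s ω)) - θstar) := by
        rw [hgcomm hfint]
        congr 1
        rw [integral_sub (by exact (hθint (s+1)).add (((hθint (s+1)).sub (hθint s)).smul c))
            (integrable_const _),
          integral_add (hθint (s+1)) (by exact ((hθint (s+1)).sub (hθint s)).smul c),
          integral_smul, integral_sub (hθint (s+1)) (hθint s), integral_const]
        simp
      rw [integral_congr_ae (Filter.Eventually.of_forall hveq),
        integral_add (by exact ((hvint s).smul (c/(c+1))).add ((hgint hfint).smul (1/(c+1))))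
          (by exact (hεint (s+1)).smul (1/(c+1))),
        integral_add (by exact (hvint s).smul (c/(c+1))) (by exact (hgint hfint).smul (1/(c+1))),
        integral_smul, integral_smul, integral_smul, ih, hεmean, smul_zero, add_zero, hmid]
      simp only [Matrix.mulVec_sub, Matrix.mulVec_add, Matrix.mulVec_smul]
      match_scalars <;> (field_simp; try ring)
  -- expected dynamics
  have hIw : ∀ t, (∫ ω, w (t+1) ω)
      = μ • (∫ ω, w t ω) + α • H.mulVec ((∫ ω, θ t ω) - θstar) := by
    intro t
    rw [integral_congr_ae (Filter.Eventually.of_forall (hw t)),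
      integral_add (by exact (hwint t).smul μ) (by exact (hvint t).smul α),
      integral_smul, integral_smul, hV]
  have hstepθ : ∀ t, (∫ ω, θ (t+1) ω) = (∫ ω, θ t ω) - (∫ ω, w (t+1) ω) := by
    intro t
    rw [integral_congr_ae (Filter.Eventually.of_forall (hθ t)),
      integral_sub (hθint t) (hwint (t+1))]
  have hWeq : ∀ t, (∫ ω, w (t+1) ω) = (∫ ω, θ t ω) - (∫ ω, θ (t+1) ω) := by
    intro t; rw [hstepθ t]; abel
  -- one-step stacked recursion
  have hstep : ∀ r : ℕ, Sum.elim ((∫ ω, θ (r+2) ω) - θstar) ((∫ ω, θ (r+1) ω) - θstar)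
      = A.mulVec (Sum.elim ((∫ ω, θ (r+1) ω) - θstar) ((∫ ω, θ r ω) - θstar)) := by
    intro r
    rw [hA, Matrix.fromBlocks_mulVec, Sum.elim_comp_inl, Sum.elim_comp_inr]
    have htop : (∫ ω, θ (r+2) ω) - θstar
        = (1 - α • H + μ • 1).mulVec ((∫ ω, θ (r+1) ω) - θstar)
          + (-(μ • (1 : Matrix (Fin d) (Fin d) ℝ))).mulVec ((∫ ω, θ r ω) - θstar) := by
      have h1 := hstepθ (r+1)
      rw [hIw (r+1), hWeq r] at h1
      rw [show r + 1 + 1 = r + 2 from rfl] at h1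
      rw [h1]
      simp only [Matrix.add_mulVec, Matrix.sub_mulVec, Matrix.neg_mulVec,
        Matrix.smul_mulVec, Matrix.one_mulVec]
      module
    have hbot : (∫ ω, θ (r+1) ω) - θstar
        = (1 : Matrix (Fin d) (Fin d) ℝ).mulVec ((∫ ω, θ (r+1) ω) - θstar)
          + (0 : Matrix (Fin d) (Fin d) ℝ).mulVec ((∫ ω, θ r ω) - θstar) := by
      rw [Matrix.one_mulVec, Matrix.zero_mulVec, add_zero]
    rw [← htop, ← hbot]
  -- iterated form
  have key1 : ∀ t : ℕ, 1 ≤ t →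
      Sum.elim ((∫ ω, θ t ω) - θstar) ((∫ ω, θ (t-1) ω) - θstar)
        = (A ^ (t-1)).mulVec
            (Sum.elim ((∫ ω, θ 1 ω) - θstar) ((∫ ω, θ 0 ω) - θstar)) := by
    intro t ht
    obtain ⟨r, rfl⟩ : ∃ r, t = r + 1 := ⟨t - 1, by omega⟩
    clear ht
    induction r with
    | zero => simp [Matrix.one_mulVec]
    | succ s ih =>
      simp only [Nat.add_sub_cancel] at ih ⊢
      rw [show s + 1 + 1 = s + 2 from rfl, hstep s, ih, Matrix.mulVec_mulVec, ← pow_succ']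
  refine ⟨key1, fun hsrad => ?_⟩
  obtain ⟨ρ, hρ0, hρ1, N, hN⟩ := specRad_geom_bound A hsrad
  set x1 : (Fin d ⊕ Fin d) → ℝ :=
    Sum.elim ((∫ ω, θ 1 ω) - θstar) ((∫ ω, θ 0 ω) - θstar) with hx1
  refine ⟨(∑ k ∈ Finset.range (N + 2), ‖(∫ ω, θ k ω) - θstar‖ / ρ ^ k) + ‖x1‖ / ρ, ρ,
    by positivity, hρ0.le, hρ1, fun t => ?_⟩
  by_cases hts : t ≤ N + 1
  · have h1 : ‖(∫ ω, θ t ω) - θstar‖ / ρ ^ t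
        ≤ ∑ k ∈ Finset.range (N+2), ‖(∫ ω, θ k ω) - θstar‖ / ρ ^ k := by
      refine Finset.single_le_sum (f := fun k => ‖(∫ ω, θ k ω) - θstar‖ / ρ ^ k)
        (fun k _ => by positivity) (Finset.mem_range.mpr (by omega))
    have h2 : ‖(∫ ω, θ t ω) - θstar‖ = (‖(∫ ω, θ t ω) - θstar‖ / ρ ^ t) * ρ ^ t := by
      field_simp
    rw [h2]
    refine mul_le_mul_of_nonneg_right (h1.trans ?_) (by positivity)
    exact le_add_of_nonneg_right (by positivity)
  · push_neg at hts
    obtain ⟨m, rfl⟩ : ∃ m, t = m + 1 := ⟨t - 1, by omega⟩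
    have hm : N ≤ m := by omega
    have heq := key1 (m+1) (by omega)
    simp only [Nat.add_sub_cancel] at heq
    have hle1 : ‖(∫ ω, θ (m+1) ω) - θstar‖
        ≤ ‖Sum.elim ((∫ ω, θ (m+1) ω) - θstar) ((∫ ω, θ m ω) - θstar)‖ :=
      norm_elim_left _ _
    rw [heq] at hle1
    have hle2 : ‖(A ^ m).mulVec x1‖ ≤ ‖A ^ m‖ * ‖x1‖ := Matrix.linfty_opNorm_mulVec _ _
    have hle3 : ‖A ^ m‖ * ‖x1‖ ≤ ρ ^ m * ‖x1‖ :=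
      mul_le_mul_of_nonneg_right (hN m hm) (norm_nonneg _)
    have hmain : ‖(∫ ω, θ (m+1) ω) - θstar‖ ≤ ρ ^ m * ‖x1‖ := hle1.trans (hle2.trans hle3)
    refine hmain.trans ?_
    have hrw : ρ ^ m * ‖x1‖ = (‖x1‖ / ρ) * ρ ^ (m+1) := by
      field_simp; ring
    rw [hrw]
    refine mul_le_mul_of_nonneg_right ?_ (by positivity)
    exact le_add_of_nonneg_left (by positivity)
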